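/- Let p be a prime, a ≢ 0 (mod p), and h = (h_1,h_2,h_3,h_4) ∈ ℤ^4. Then the exponential sum S = ∑ e_p(h_1x_1 + h_2x_2 + h_3x_3 + h_4x_4), over all (x_1,x_2,x_3,x_4) ∈ (ℤ/pℤ)^4 with x_1^3 + x_2^3 ≡ a(x_3^3+x_4^3) (mod p), satisfies |S| ≤ C·gcd(h_1,h_2,h_3,h_4,p)·p^2 for an absolute constant C. -/

import Mathlib

open Finset Complex

noncomputable def psi {p : ℕ} [NeZero p] : AddChar (ZMod p) ℂ := ZMod.stdAddChar
noncomputable def TT {p : ℕ} [NeZero p] (w h : ZMod p) : ℂ := ∑ x : ZMod p, psi (w * x ^ 3 + h * x)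
section
variable {p : ℕ} [Fact p.Prime]
local notation "K" => ZMod p

lemma psi_norm (x : K) : ‖(psi x : ℂ)‖ = 1 := by
  rw [psi, ZMod.stdAddChar_apply, Circle.norm_coe]

lemma conj_psi (x : K) : (starRingEnd ℂ) (psi x) = psi (-x) := by
  rw [AddChar.map_neg_eq_inv, ← Complex.inv_eq_conj]
  exact psi_norm x

lemma orth (t : K) : ∑ w : K, psi (w * t) = if t = 0 then (p : ℂ) else 0 := by
  rw [psi, AddChar.sum_mulShift t (ZMod.isPrimitive_stdAddChar p), ZMod.card]
  split_ifs <;> simp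

lemma phase (n : ℤ) : Complex.exp (2 * Real.pi * Complex.I * (n : ℂ) / (p : ℂ)) = psi ((n : K)) := by
  rw [psi, ZMod.stdAddChar_coe]

lemma T_scale (w h l : K) (hl : l ≠ 0) : TT (w * l ^ 3) (h * l) = TT w h := by
  rw [TT, TT]
  rw [← Fintype.sum_equiv (Equiv.mulLeft₀ l hl)
    (fun x => psi (w * l ^ 3 * x ^ 3 + h * l * x)) (fun x => psi (w * x ^ 3 + h * x))]
  intro x
  simp only [Equiv.mulLeft₀_apply]
  ring_nf

lemma nsq_expand (w h : K) : ((Complex.normSq (TT w h) : ℂ))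
    = ∑ z : K × K, psi (w * (z.1 ^ 3 - z.2 ^ 3) + h * (z.1 - z.2)) := by
  rw [← Complex.mul_conj, TT, map_sum, Fintype.sum_prod_type]
  rw [Finset.sum_mul_sum]
  apply Finset.sum_congr rfl; intro x _
  apply Finset.sum_congr rfl; intro y _
  rw [conj_psi, ← AddChar.map_add_eq_mul]
  congr 1; ring

lemma CR (c : K) : (univ.filter fun x : K => x ^ 3 = c).card ≤ 3 := by
  have hsub : (univ.filter fun x : K => x ^ 3 = c) ⊆ (Polynomial.nthRoots 3 c).toFinset := by
    intro x hx
    rw [Multiset.mem_toFinset, Polynomial.mem_nthRoots (by norm_num)]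
    exact (Finset.mem_filter.mp hx).2
  calc (univ.filter fun x : K => x ^ 3 = c).card ≤ (Polynomial.nthRoots 3 c).toFinset.card :=
        Finset.card_le_card hsub
    _ ≤ Multiset.card (Polynomial.nthRoots 3 c) := Multiset.toFinset_card_le _
    _ ≤ 3 := Polynomial.card_nthRoots 3 c

lemma count2_le : (univ.filter fun z : K × K => z.1 ^ 3 = z.2 ^ 3).card ≤ 3 * p := by
  rw [Finset.card_filter, Fintype.sum_prod_type]
  calc ∑ x : K, ∑ y : K, (if x ^ 3 = y ^ 3 then 1 else 0)
      ≤ ∑ x : K, 3 := by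
        apply Finset.sum_le_sum; intro x _
        have : ∑ y : K, (if x ^ 3 = y ^ 3 then 1 else 0)
            = (univ.filter fun y : K => y ^ 3 = x ^ 3).card := by
          rw [Finset.card_filter]
          apply Finset.sum_congr rfl; intro y _
          simp [eq_comm]
        rw [this]; exact CR _
    _ = 3 * p := by simp [ZMod.card, mul_comm]

lemma M2R : ∑ w : K, Complex.normSq (TT w (0:K)) ≤ 3 * (p:ℝ) ^ 2 := by
  have hC : ∑ w : K, (Complex.normSq (TT w (0:K)) : ℂ)
      = (p : ℂ) * ((univ.filter fun z : K × K => z.1 ^ 3 = z.2 ^ 3).card : ℂ) := by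
    calc ∑ w : K, (Complex.normSq (TT w (0:K)) : ℂ)
        = ∑ w : K, ∑ z : K × K, psi (w * (z.1 ^ 3 - z.2 ^ 3)) := by
          apply Finset.sum_congr rfl; intro w _
          rw [nsq_expand]
          apply Finset.sum_congr rfl; intro z _
          congr 1; ring
      _ = ∑ z : K × K, ∑ w : K, psi (w * (z.1 ^ 3 - z.2 ^ 3)) := Finset.sum_comm
      _ = ∑ z : K × K, (if z.1 ^ 3 = z.2 ^ 3 then (p:ℂ) else 0) := by
          apply Finset.sum_congr rfl; intro z _
          rw [orth]; simp [sub_eq_zero]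
      _ = (p : ℂ) * ((univ.filter fun z : K × K => z.1 ^ 3 = z.2 ^ 3).card : ℂ) := by
          rw [← Finset.sum_filter, Finset.sum_const, nsmul_eq_mul, mul_comm]
  have hR : ∑ w : K, Complex.normSq (TT w (0:K))
      = (p : ℝ) * ((univ.filter fun z : K × K => z.1 ^ 3 = z.2 ^ 3).card : ℝ) := by
    exact_mod_cast hC
  rw [hR]
  have := count2_le (p := p)
  have hp0 : (0:ℝ) ≤ (p:ℝ) := Nat.cast_nonneg p
  calc (p:ℝ) * ((univ.filter fun z : K × K => z.1 ^ 3 = z.2 ^ 3).card : ℝ)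
      ≤ (p:ℝ) * (3 * p) := by
        apply mul_le_mul_of_nonneg_left _ hp0
        exact_mod_cast this
    _ = 3 * (p:ℝ) ^ 2 := by ring

def Cq (q : (K × K) × (K × K)) : K := q.1.1 ^ 3 - q.1.2 ^ 3 + q.2.1 ^ 3 - q.2.2 ^ 3
def Lq (q : (K × K) × (K × K)) : K := q.1.1 - q.1.2 + q.2.1 - q.2.2

lemma count4_le (h3 : (3 : K) ≠ 0) :
    (univ.filter fun q : (K × K) × (K × K) => Cq q = 0 ∧ Lq q = 0).card ≤ 3 * p ^ 2 := by
  set f1 : Finset ((K × K) × (K × K)) :=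
    univ.filter fun q => q.1.2 = q.1.1 ∧ q.2.2 = q.2.1 with hf1
  set f2 : Finset ((K × K) × (K × K)) :=
    univ.filter fun q => q.1.2 = q.2.1 ∧ q.2.2 = q.1.1 with hf2
  set f3 : Finset ((K × K) × (K × K)) :=
    univ.filter fun q => q.1.1 + q.2.1 = 0 ∧ q.1.2 + q.2.2 = 0 with hf3
  have hsub : (univ.filter fun q : (K × K) × (K × K) => Cq q = 0 ∧ Lq q = 0) ⊆ f1 ∪ f2 ∪ f3 := by
    intro q hq
    obtain ⟨-, h1, h2⟩ := Finset.mem_filter.mp hq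
    obtain ⟨⟨x1, y1⟩, ⟨x2, y2⟩⟩ := q
    simp only [Cq, Lq] at h1 h2
    have key : (3 : K) * ((x1 + x2) * ((y1 - x1) * (y1 - x2))) = 0 := by
      linear_combination -h1 + ((x1 + x2 - y1) ^ 2 + (x1 + x2 - y1) * y2 + y2 ^ 2) * h2
    have key' := (mul_eq_zero.mp key).resolve_left h3
    simp only [Finset.mem_union, hf1, hf2, hf3, Finset.mem_filter, Finset.mem_univ, true_and]
    rcases mul_eq_zero.mp key' with hs | hyy
    · exact Or.inr ⟨by linear_combination hs, by linear_combination hs - h2⟩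
    · rcases mul_eq_zero.mp hyy with hy | hy
      · exact Or.inl (Or.inl ⟨by linear_combination hy, by linear_combination -hy - h2⟩)
      · exact Or.inl (Or.inr ⟨by linear_combination hy, by linear_combination -hy - h2⟩)
  have hcard : ∀ (P : (K × K) × (K × K) → Prop) (_ : DecidablePred P)
      (g : (K × K) × (K × K) → K × K),
      Set.InjOn g (univ.filter fun q => P q) → (univ.filter fun q => P q).card ≤ p ^ 2 := by
    intro P _ g hg
    calc (univ.filter fun q => P q).card ≤ (univ : Finset (K × K)).card :=
          Finset.card_le_card_of_injOn g (fun a _ => Finset.mem_univ _) hg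
      _ = p ^ 2 := by simp [ZMod.card, sq]
  have h1c : f1.card ≤ p ^ 2 := by
    rw [hf1]; apply hcard _ _ (fun q => (q.1.1, q.2.1))
    intro a ha b hb hab
    obtain ⟨⟨a1, a2⟩, a3, a4⟩ := a; obtain ⟨⟨b1, b2⟩, b3, b4⟩ := b
    simp only [Finset.coe_filter, Set.mem_setOf_eq, Finset.mem_univ, true_and] at ha hb
    simp only [Prod.mk.injEq] at hab ⊢
    simp_all
  have h2c : f2.card ≤ p ^ 2 := by
    rw [hf2]; apply hcard _ _ (fun q => (q.1.1, q.2.1))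
    intro a ha b hb hab
    obtain ⟨⟨a1, a2⟩, a3, a4⟩ := a; obtain ⟨⟨b1, b2⟩, b3, b4⟩ := b
    simp only [Finset.coe_filter, Set.mem_setOf_eq, Finset.mem_univ, true_and] at ha hb
    simp only [Prod.mk.injEq] at hab ⊢
    simp_all
  have h3c : f3.card ≤ p ^ 2 := by
    rw [hf3]; apply hcard _ _ (fun q => (q.1.1, q.1.2))
    intro a ha b hb hab
    obtain ⟨⟨a1, a2⟩, a3, a4⟩ := a; obtain ⟨⟨b1, b2⟩, b3, b4⟩ := b
    simp only [Finset.coe_filter, Set.mem_setOf_eq, Finset.mem_univ, true_and] at ha hb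
    simp only [Prod.mk.injEq] at hab ⊢
    obtain ⟨e1, e2⟩ := hab
    subst e1; subst e2
    refine ⟨⟨rfl, rfl⟩, ?_, ?_⟩
    · linear_combination ha.1 - hb.1
    · linear_combination ha.2 - hb.2
  calc (univ.filter fun q : (K × K) × (K × K) => Cq q = 0 ∧ Lq q = 0).card
      ≤ (f1 ∪ f2 ∪ f3).card := Finset.card_le_card hsub
    _ ≤ (f1 ∪ f2).card + f3.card := Finset.card_union_le _ _
    _ ≤ f1.card + f2.card + f3.card := by
        have := Finset.card_union_le f1 f2; omega
    _ ≤ 3 * p ^ 2 := by omega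

lemma nsq_sq_expand (w h : K) : ((Complex.normSq (TT w h) : ℂ)) ^ 2
    = ∑ q : (K × K) × (K × K), psi (w * Cq q + h * Lq q) := by
  rw [sq, nsq_expand, Finset.sum_mul_sum,
    show (∑ q : (K × K) × (K × K), psi (w * Cq q + h * Lq q))
      = ∑ i : K × K, ∑ j : K × K, psi (w * Cq (i, j) + h * Lq (i, j)) from Fintype.sum_prod_type (f := fun q => psi (w * Cq q + h * Lq q))]
  apply Finset.sum_congr rfl; intro i _
  apply Finset.sum_congr rfl; intro j _
  rw [← AddChar.map_add_eq_mul]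
  congr 1; simp only [Cq, Lq]; ring

lemma M4R : ∑ w : K, ∑ h : K, (Complex.normSq (TT w h)) ^ 2
    = (p:ℝ) ^ 2 * ((univ.filter fun q : (K × K) × (K × K) => Cq q = 0 ∧ Lq q = 0).card : ℝ) := by
  have hC : ∑ w : K, ∑ h : K, ((Complex.normSq (TT w h) : ℂ)) ^ 2
      = (p:ℂ) ^ 2 * ((univ.filter fun q : (K × K) × (K × K) => Cq q = 0 ∧ Lq q = 0).card : ℂ) := by
    calc ∑ w : K, ∑ h : K, ((Complex.normSq (TT w h) : ℂ)) ^ 2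
        = ∑ w : K, ∑ h : K, ∑ q : (K × K) × (K × K), psi (w * Cq q + h * Lq q) := by
          apply Finset.sum_congr rfl; intro w _
          apply Finset.sum_congr rfl; intro h _
          exact nsq_sq_expand w h
      _ = ∑ w : K, ∑ q : (K × K) × (K × K), psi (w * Cq q) * (if Lq q = 0 then (p:ℂ) else 0) := by
          apply Finset.sum_congr rfl; intro w _
          rw [Finset.sum_comm]
          apply Finset.sum_congr rfl; intro q _
          calc ∑ x : K, psi (w * Cq q + x * Lq q)
              = ∑ x : K, psi (w * Cq q) * psi (x * Lq q) := by
                apply Finset.sum_congr rfl; intro x _; rw [← AddChar.map_add_eq_mul]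
            _ = psi (w * Cq q) * ∑ x : K, psi (x * Lq q) := by rw [Finset.mul_sum]
            _ = _ := by rw [orth]
      _ = ∑ q : (K × K) × (K × K), (if Cq q = 0 then (p:ℂ) else 0) * (if Lq q = 0 then (p:ℂ) else 0) := by
          rw [Finset.sum_comm]
          apply Finset.sum_congr rfl; intro q _
          rw [← Finset.sum_mul, orth]
      _ = (p:ℂ) ^ 2 * ((univ.filter fun q : (K × K) × (K × K) => Cq q = 0 ∧ Lq q = 0).card : ℂ) := by
          rw [Finset.card_filter]
          push_cast
          rw [Finset.mul_sum]
          apply Finset.sum_congr rfl; intro q _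
          by_cases h1 : Cq q = 0 <;> by_cases h2 : Lq q = 0 <;> simp [h1, h2] <;> ring
  exact_mod_cast hC

lemma M4R' (h3 : (3 : K) ≠ 0) :
    ∑ w : K, ∑ h : K, (Complex.normSq (TT w h)) ^ 2 ≤ 3 * (p:ℝ) ^ 4 := by
  rw [M4R]
  have hc := count4_le h3
  have hcR : (((univ.filter fun q : (K × K) × (K × K) => Cq q = 0 ∧ Lq q = 0).card : ℝ))
      ≤ 3 * (p:ℝ) ^ 2 := by exact_mod_cast hc
  have hp0 : (0:ℝ) ≤ (p:ℝ) ^ 2 := by positivity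
  calc (p:ℝ) ^ 2 * ((univ.filter fun q : (K × K) × (K × K) => Cq q = 0 ∧ Lq q = 0).card : ℝ)
      ≤ (p:ℝ) ^ 2 * (3 * (p:ℝ) ^ 2) := mul_le_mul_of_nonneg_left hcR hp0
    _ = 3 * (p:ℝ) ^ 4 := by ring

/-- reindexing a sum over the nonzero elements by multiplication -/
lemma erase_reindex (c : K) (hc : c ≠ 0) (F : K → ℝ) :
    ∑ w ∈ univ.erase (0:K), F (c * w) = ∑ w ∈ univ.erase (0:K), F w := by
  rw [Finset.sum_erase_eq_sub (Finset.mem_univ 0), Finset.sum_erase_eq_sub (Finset.mem_univ 0)]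
  rw [Fintype.sum_bijective (fun x => c * x) (mulLeft_bijective₀ c hc) _ F (fun x => rfl),
    mul_zero]

lemma card_erase : (univ.erase (0:K)).card = p - 1 := by
  rw [Finset.card_erase_of_mem (Finset.mem_univ 0), Finset.card_univ, ZMod.card]

lemma hp2 : (2:ℝ) ≤ (p:ℝ) := by
  have := (Fact.out : p.Prime).two_le
  exact_mod_cast this

/-- pointwise bound for the pure cubic sum -/
lemma pointwise_h0 (w : K) (hw : w ≠ 0) : Complex.normSq (TT w (0:K)) ≤ 18 * (p:ℝ) := by
  set F : K → ℝ := fun u => Complex.normSq (TT u (0:K)) with hF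
  have hFnn : ∀ u, 0 ≤ F u := fun u => Complex.normSq_nonneg _
  have key : ((p:ℝ) - 1) * F w ≤ 9 * (p:ℝ) ^ 2 := by
    have e1 : ∑ l ∈ univ.erase (0:K), F (w * l ^ 3) = ((p:ℝ) - 1) * F w := by
      have : ∀ l ∈ univ.erase (0:K), F (w * l ^ 3) = F w := by
        intro l hl
        have hl0 : l ≠ 0 := Finset.ne_of_mem_erase hl
        rw [hF]
        simp only
        rw [show TT (w * l ^ 3) (0:K) = TT (w * l ^ 3) ((0:K) * l) by rw [zero_mul],
          T_scale w 0 l hl0]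
      rw [Finset.sum_congr rfl this, Finset.sum_const, card_erase, nsmul_eq_mul]
      congr 1
      rw [Nat.cast_sub (Fact.out : p.Prime).one_lt.le]
      norm_num
    have e2 : ∑ l ∈ univ.erase (0:K), F (w * l ^ 3)
        ≤ 3 * ∑ u ∈ univ.erase (0:K), F u := by
      rw [Finset.sum_comp F (fun l => w * l ^ 3)]
      have himg : (univ.erase (0:K)).image (fun l => w * l ^ 3) ⊆ univ.erase (0:K) := by
        intro b hb
        obtain ⟨l, hl, rfl⟩ := Finset.mem_image.mp hb
        have hl0 : l ≠ 0 := Finset.ne_of_mem_erase hl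
        exact Finset.mem_erase.mpr ⟨mul_ne_zero hw (pow_ne_zero 3 hl0), Finset.mem_univ _⟩
      calc ∑ b ∈ (univ.erase (0:K)).image (fun l => w * l ^ 3),
              ((univ.erase (0:K)).filter fun l => w * l ^ 3 = b).card • F b
          ≤ ∑ b ∈ (univ.erase (0:K)).image (fun l => w * l ^ 3), 3 * F b := by
            apply Finset.sum_le_sum
            intro b hb
            rw [nsmul_eq_mul]
            apply mul_le_mul_of_nonneg_right _ (hFnn b)
            have hsub : ((univ.erase (0:K)).filter fun l => w * l ^ 3 = b)
                ⊆ univ.filter fun l : K => l ^ 3 = w⁻¹ * b := by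
              intro l hl
              obtain ⟨hl1, hl2⟩ := Finset.mem_filter.mp hl
              refine Finset.mem_filter.mpr ⟨Finset.mem_univ _, ?_⟩
              field_simp [hw] at hl2 ⊢
              linear_combination hl2
            have := le_trans (Finset.card_le_card hsub) (CR (w⁻¹ * b))
            exact_mod_cast this
        _ ≤ 3 * ∑ u ∈ univ.erase (0:K), F u := by
            rw [← Finset.mul_sum]
            apply mul_le_mul_of_nonneg_left _ (by norm_num : (0:ℝ) ≤ 3)
            exact Finset.sum_le_sum_of_subset_of_nonneg himg (fun u _ _ => hFnn u)
    have e3 : ∑ u ∈ univ.erase (0:K), F u ≤ 3 * (p:ℝ) ^ 2 := by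
      refine le_trans (Finset.sum_le_sum_of_subset_of_nonneg (Finset.subset_univ _)
        (fun u _ _ => hFnn u)) M2R
    linarith [e1, e2, e3]
  have hp := hp2 (p := p)
  nlinarith [hFnn w, key]

lemma fourth_moment_bound (h3 : (3 : K) ≠ 0) (h : K) :
    ∑ w ∈ univ.erase (0:K), (Complex.normSq (TT w h)) ^ 2 ≤ 324 * (p:ℝ) ^ 3 := by
  have hp := hp2 (p := p)
  have hcard : ((univ.erase (0:K)).card : ℝ) = (p:ℝ) - 1 := by
    rw [card_erase, Nat.cast_sub (Fact.out : p.Prime).one_lt.le]; norm_num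
  by_cases hh : h = 0
  · subst hh
    calc ∑ w ∈ univ.erase (0:K), (Complex.normSq (TT w (0:K))) ^ 2
        ≤ ∑ _w ∈ univ.erase (0:K), (18 * (p:ℝ)) ^ 2 := by
          apply Finset.sum_le_sum
          intro w hw
          have := pointwise_h0 w (Finset.ne_of_mem_erase hw)
          have hnn := Complex.normSq_nonneg (TT w (0:K))
          nlinarith
      _ = ((p:ℝ) - 1) * (324 * (p:ℝ) ^ 2) := by
          rw [Finset.sum_const, nsmul_eq_mul, hcard]; ring
      _ ≤ 324 * (p:ℝ) ^ 3 := by nlinarith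
  · -- Mordell's argument
    set Q : K → K → ℝ := fun w h => (Complex.normSq (TT w h)) ^ 2 with hQ
    have hQnn : ∀ w h, 0 ≤ Q w h := fun w h => sq_nonneg _
    have key1 : ∀ l : K, l ≠ 0 →
        ∑ w ∈ univ.erase (0:K), Q w h = ∑ u ∈ univ.erase (0:K), Q u (h * l) := by
      intro l hl
      have step : ∀ w ∈ univ.erase (0:K), Q w h = (fun u => Q u (h * l)) (l ^ 3 * w) := by
        intro w _
        simp only [hQ]
        rw [show l ^ 3 * w = w * l ^ 3 by ring, T_scale w h l hl]
      rw [Finset.sum_congr rfl step]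
      exact erase_reindex (l ^ 3) (pow_ne_zero 3 hl) (fun u => Q u (h * l))
    have key2 : ((p:ℝ) - 1) * ∑ w ∈ univ.erase (0:K), Q w h
        = ∑ m ∈ univ.erase (0:K), ∑ u ∈ univ.erase (0:K), Q u m := by
      calc ((p:ℝ) - 1) * ∑ w ∈ univ.erase (0:K), Q w h
          = ∑ l ∈ univ.erase (0:K), ∑ w ∈ univ.erase (0:K), Q w h := by
            rw [Finset.sum_const, nsmul_eq_mul, hcard]
        _ = ∑ l ∈ univ.erase (0:K), (fun m => ∑ u ∈ univ.erase (0:K), Q u m) (h * l) := by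
            apply Finset.sum_congr rfl
            intro l hl
            exact key1 l (Finset.ne_of_mem_erase hl)
        _ = ∑ m ∈ univ.erase (0:K), ∑ u ∈ univ.erase (0:K), Q u m :=
            erase_reindex h hh (fun m => ∑ u ∈ univ.erase (0:K), Q u m)
    have key3 : ∑ m ∈ univ.erase (0:K), ∑ u ∈ univ.erase (0:K), Q u m ≤ 3 * (p:ℝ) ^ 4 := by
      calc ∑ m ∈ univ.erase (0:K), ∑ u ∈ univ.erase (0:K), Q u m
          ≤ ∑ m : K, ∑ u ∈ univ.erase (0:K), Q u m := by
            apply Finset.sum_le_sum_of_subset_of_nonneg (Finset.subset_univ _)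
            intro m _ _
            exact Finset.sum_nonneg fun u _ => hQnn u m
        _ ≤ ∑ m : K, ∑ u : K, Q u m := by
            apply Finset.sum_le_sum
            intro m _
            exact Finset.sum_le_sum_of_subset_of_nonneg (Finset.subset_univ _)
              (fun u _ _ => hQnn u m)
        _ = ∑ u : K, ∑ m : K, Q u m := Finset.sum_comm
        _ ≤ 3 * (p:ℝ) ^ 4 := M4R' h3
    have hXnn : 0 ≤ ∑ w ∈ univ.erase (0:K), Q w h :=
      Finset.sum_nonneg fun w _ => hQnn w h
    nlinarith [key2, key3, hXnn]

lemma T_zero (t : K) : TT (0:K) t = if t = 0 then (p : ℂ) else 0 := by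
  rw [TT, ← orth]
  apply Finset.sum_congr rfl; intro x _
  congr 1; ring

lemma completion (a : K) (h : Fin 4 → ℤ) :
    (p : ℂ) * (∑ x : Fin 4 → K,
        (if x 0 ^ 3 + x 1 ^ 3 = a * (x 2 ^ 3 + x 3 ^ 3) then
          Complex.exp (2 * Real.pi * Complex.I *
            ((∑ j, h j * ((x j).val : ℤ) : ℤ) : ℂ) / (p : ℂ))
        else 0))
    = ∑ w : K, ∏ j : Fin 4, TT ((![1, 1, -a, -a] : Fin 4 → K) j * w) (((h j : ℤ) : K)) := by
  set c : Fin 4 → K := ![1, 1, -a, -a] with hc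
  set hb : Fin 4 → K := fun j => ((h j : ℤ) : K) with hhb
  have stepA : ∀ x : Fin 4 → K,
      (if x 0 ^ 3 + x 1 ^ 3 = a * (x 2 ^ 3 + x 3 ^ 3) then
        Complex.exp (2 * Real.pi * Complex.I *
          ((∑ j, h j * ((x j).val : ℤ) : ℤ) : ℂ) / (p : ℂ))
      else 0)
      = (if x 0 ^ 3 + x 1 ^ 3 - a * (x 2 ^ 3 + x 3 ^ 3) = 0 then (1:ℂ) else 0)
          * psi (∑ j, hb j * x j) := by
    intro x
    have hL : ((∑ j, h j * ((x j).val : ℤ) : ℤ) : K) = ∑ j, hb j * x j := by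
      push_cast [hhb]
      apply Finset.sum_congr rfl; intro j _
      rw [ZMod.natCast_val, ZMod.cast_id]
    rw [phase, hL]
    by_cases hcond : x 0 ^ 3 + x 1 ^ 3 = a * (x 2 ^ 3 + x 3 ^ 3)
    · rw [if_pos hcond, if_pos (by rw [hcond]; ring), one_mul]
    · rw [if_neg hcond, if_neg (fun hz => hcond (by linear_combination hz)), zero_mul]
  calc (p : ℂ) * (∑ x : Fin 4 → K, _)
      = ∑ x : Fin 4 → K, (if x 0 ^ 3 + x 1 ^ 3 - a * (x 2 ^ 3 + x 3 ^ 3) = 0 then (p:ℂ) else 0)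
          * psi (∑ j, hb j * x j) := by
        rw [Finset.mul_sum]
        apply Finset.sum_congr rfl; intro x _
        rw [stepA x]
        by_cases hz : x 0 ^ 3 + x 1 ^ 3 - a * (x 2 ^ 3 + x 3 ^ 3) = 0 <;> simp [hz]
    _ = ∑ x : Fin 4 → K, ∑ w : K,
          psi (w * (x 0 ^ 3 + x 1 ^ 3 - a * (x 2 ^ 3 + x 3 ^ 3))) * psi (∑ j, hb j * x j) := by
        apply Finset.sum_congr rfl; intro x _
        rw [← Finset.sum_mul, orth]
    _ = ∑ w : K, ∑ x : Fin 4 → K,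
          psi (w * (x 0 ^ 3 + x 1 ^ 3 - a * (x 2 ^ 3 + x 3 ^ 3)) + ∑ j, hb j * x j) := by
        rw [Finset.sum_comm]
        apply Finset.sum_congr rfl; intro w _
        apply Finset.sum_congr rfl; intro x _
        rw [AddChar.map_add_eq_mul]
    _ = ∑ w : K, ∏ j : Fin 4, TT (c j * w) (hb j) := by
        apply Finset.sum_congr rfl; intro w _
        calc ∑ x : Fin 4 → K,
              psi (w * (x 0 ^ 3 + x 1 ^ 3 - a * (x 2 ^ 3 + x 3 ^ 3)) + ∑ j, hb j * x j)
            = ∑ x : Fin 4 → K, ∏ j : Fin 4, psi (c j * w * (x j) ^ 3 + hb j * (x j)) := by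
              apply Finset.sum_congr rfl; intro x _
              rw [Fin.prod_univ_four]
              rw [← AddChar.map_add_eq_mul, ← AddChar.map_add_eq_mul, ← AddChar.map_add_eq_mul]
              congr 1
              rw [Fin.sum_univ_four]
              simp only [hc, Matrix.cons_val_zero, Matrix.cons_val_one, Matrix.head_cons,
                Matrix.cons_val_two, Matrix.tail_cons, Matrix.cons_val_three]
              ring
          _ = ∏ j : Fin 4, TT (c j * w) (hb j) := by
              simp only [TT]
              rw [Finset.prod_univ_sum]
              rw [Fintype.piFinset_univ]

/-- Hölder bound for the nonzero-w part. -/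
lemma offzero_bound (a : K) (ha : a ≠ 0) (h3 : (3 : K) ≠ 0) (hb : Fin 4 → K) :
    ∑ w ∈ univ.erase (0:K), ‖∏ j : Fin 4, TT ((![1, 1, -a, -a] : Fin 4 → K) j * w) (hb j)‖
      ≤ 324 * (p:ℝ) ^ 3 := by
  set c : Fin 4 → K := ![1, 1, -a, -a] with hc
  have hcne : ∀ j, c j ≠ 0 := by
    intro j
    fin_cases j <;> simp [hc] <;> exact ha
  set A : Fin 4 → (K → ℝ) := fun j w => ‖TT (c j * w) (hb j)‖ with hA
  have hAnn : ∀ j w, 0 ≤ A j w := fun j w => norm_nonneg _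
  have hA4 : ∀ j, ∑ w ∈ univ.erase (0:K), (A j w) ^ 4 ≤ 324 * (p:ℝ) ^ 3 := by
    intro j
    have e1 : ∑ w ∈ univ.erase (0:K), (A j w) ^ 4
        = ∑ w ∈ univ.erase (0:K), (fun u => (Complex.normSq (TT u (hb j))) ^ 2) (c j * w) := by
      apply Finset.sum_congr rfl; intro w _
      simp only [hA, Complex.normSq_eq_norm_sq]
      ring
    rw [e1, erase_reindex (c j) (hcne j) (fun u => (Complex.normSq (TT u (hb j))) ^ 2)]
    exact fourth_moment_bound h3 (hb j)
  -- Cauchy–Schwarz twice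
  set s : Finset K := univ.erase (0:K) with hs
  set X : ℝ := ∑ w ∈ s, (A 0 w * A 1 w) * (A 2 w * A 3 w) with hX
  have hXnn : 0 ≤ X := Finset.sum_nonneg fun w _ => by positivity
  have cs1 : X ^ 2 ≤ (∑ w ∈ s, (A 0 w * A 1 w) ^ 2) * (∑ w ∈ s, (A 2 w * A 3 w) ^ 2) :=
    Finset.sum_mul_sq_le_sq_mul_sq s _ _
  have cs2 : (∑ w ∈ s, (A 0 w * A 1 w) ^ 2) ^ 2
      ≤ (∑ w ∈ s, (A 0 w) ^ 4) * (∑ w ∈ s, (A 1 w) ^ 4) := by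
    have := Finset.sum_mul_sq_le_sq_mul_sq s (fun w => (A 0 w) ^ 2) (fun w => (A 1 w) ^ 2)
    calc (∑ w ∈ s, (A 0 w * A 1 w) ^ 2) ^ 2
        = (∑ w ∈ s, (A 0 w) ^ 2 * (A 1 w) ^ 2) ^ 2 := by
          congr 1; apply Finset.sum_congr rfl; intro w _; ring
      _ ≤ (∑ w ∈ s, ((A 0 w) ^ 2) ^ 2) * (∑ w ∈ s, ((A 1 w) ^ 2) ^ 2) := this
      _ = (∑ w ∈ s, (A 0 w) ^ 4) * (∑ w ∈ s, (A 1 w) ^ 4) := by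
          congr 1 <;> (apply Finset.sum_congr rfl; intro w _; ring)
  have cs3 : (∑ w ∈ s, (A 2 w * A 3 w) ^ 2) ^ 2
      ≤ (∑ w ∈ s, (A 2 w) ^ 4) * (∑ w ∈ s, (A 3 w) ^ 4) := by
    have := Finset.sum_mul_sq_le_sq_mul_sq s (fun w => (A 2 w) ^ 2) (fun w => (A 3 w) ^ 2)
    calc (∑ w ∈ s, (A 2 w * A 3 w) ^ 2) ^ 2
        = (∑ w ∈ s, (A 2 w) ^ 2 * (A 3 w) ^ 2) ^ 2 := by
          congr 1; apply Finset.sum_congr rfl; intro w _; ring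
      _ ≤ (∑ w ∈ s, ((A 2 w) ^ 2) ^ 2) * (∑ w ∈ s, ((A 3 w) ^ 2) ^ 2) := this
      _ = (∑ w ∈ s, (A 2 w) ^ 4) * (∑ w ∈ s, (A 3 w) ^ 4) := by
          congr 1 <;> (apply Finset.sum_congr rfl; intro w _; ring)
  have hBnn : ∀ j, 0 ≤ ∑ w ∈ s, (A j w) ^ 4 :=
    fun j => Finset.sum_nonneg fun w _ => by positivity
  have hB2nn : ∀ (f : K → ℝ), 0 ≤ ∑ w ∈ s, (f w) ^ 2 :=
    fun f => Finset.sum_nonneg fun w _ => sq_nonneg _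
  have hM : (0:ℝ) ≤ 324 * (p:ℝ) ^ 3 := by
    have := hp2 (p := p); positivity
  have X4 : X ^ 4 ≤ (324 * (p:ℝ) ^ 3) ^ 4 := by
    calc X ^ 4 = (X ^ 2) ^ 2 := by ring
      _ ≤ ((∑ w ∈ s, (A 0 w * A 1 w) ^ 2) * (∑ w ∈ s, (A 2 w * A 3 w) ^ 2)) ^ 2 := by
          apply pow_le_pow_left₀ (sq_nonneg X) cs1
      _ = (∑ w ∈ s, (A 0 w * A 1 w) ^ 2) ^ 2 * (∑ w ∈ s, (A 2 w * A 3 w) ^ 2) ^ 2 := by ring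
      _ ≤ ((∑ w ∈ s, (A 0 w) ^ 4) * (∑ w ∈ s, (A 1 w) ^ 4))
            * ((∑ w ∈ s, (A 2 w) ^ 4) * (∑ w ∈ s, (A 3 w) ^ 4)) := by
          apply mul_le_mul cs2 cs3 (sq_nonneg _)
          exact mul_nonneg (hBnn 0) (hBnn 1)
      _ ≤ (324 * (p:ℝ) ^ 3) ^ 4 := by
          have h0 := hA4 0; have h1 := hA4 1; have h2 := hA4 2; have h3' := hA4 3
          have n0 := hBnn 0; have n1 := hBnn 1; have n2 := hBnn 2; have n3 := hBnn 3
          calc ((∑ w ∈ s, (A 0 w) ^ 4) * (∑ w ∈ s, (A 1 w) ^ 4))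
                * ((∑ w ∈ s, (A 2 w) ^ 4) * (∑ w ∈ s, (A 3 w) ^ 4))
              ≤ ((324 * (p:ℝ) ^ 3) * (324 * (p:ℝ) ^ 3))
                * ((324 * (p:ℝ) ^ 3) * (324 * (p:ℝ) ^ 3)) := by
                apply mul_le_mul (mul_le_mul h0 h1 n1 hM) (mul_le_mul h2 h3' n3 hM)
                  (mul_nonneg n2 n3) (mul_nonneg hM hM)
            _ = (324 * (p:ℝ) ^ 3) ^ 4 := by ring
  have hfin : X ≤ 324 * (p:ℝ) ^ 3 := by
    exact le_of_pow_le_pow_left₀ (by norm_num) hM X4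
  calc ∑ w ∈ s, ‖∏ j : Fin 4, TT (c j * w) (hb j)‖
      = X := by
        apply Finset.sum_congr rfl; intro w _
        rw [norm_prod, Fin.prod_univ_four]
        simp only [hA]
        ring
    _ ≤ 324 * (p:ℝ) ^ 3 := hfin

end


/-- Weil-type bound for the exponential sum over the variety
`x₁³ + x₂³ ≡ a(x₃³ + x₄³) (mod p)`, `a ≢ 0`:
`|S(a,h;p)| ≤ C·gcd(h₁,h₂,h₃,h₄,p)·p²`. -/
theorem exp_sum_cubic_fourfold_bound :
    ∃ C : ℝ, 0 < C ∧ ∀ (p : ℕ) [Fact p.Prime] (a : ZMod p), a ≠ 0 → ∀ h : Fin 4 → ℤ,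
      ‖∑ x : Fin 4 → ZMod p,
          (if x 0 ^ 3 + x 1 ^ 3 = a * (x 2 ^ 3 + x 3 ^ 3) then
            Complex.exp (2 * Real.pi * Complex.I *
              ((∑ j, h j * ((x j).val : ℤ) : ℤ) : ℂ) / (p : ℂ))
          else 0)‖
        ≤ C * (Int.gcd (h 0) (Int.gcd (h 1) (Int.gcd (h 2) (Int.gcd (h 3) (p : ℤ)))) : ℝ)
            * (p : ℝ) ^ 2 := by
  refine ⟨400, by norm_num, ?_⟩
  intro p _ a ha h
  set S : ℂ := ∑ x : Fin 4 → ZMod p,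
      (if x 0 ^ 3 + x 1 ^ 3 = a * (x 2 ^ 3 + x 3 ^ 3) then
        Complex.exp (2 * Real.pi * Complex.I *
          ((∑ j, h j * ((x j).val : ℤ) : ℤ) : ℂ) / (p : ℂ))
      else 0) with hS
  set g : ℕ := Int.gcd (h 0) (Int.gcd (h 1) (Int.gcd (h 2) (Int.gcd (h 3) (p : ℤ)))) with hg
  have hpR : (2:ℝ) ≤ (p:ℝ) := hp2
  have hpPos : (0:ℝ) < (p:ℝ) := by linarith
  have hpZ : ((p:ℕ) : ℤ) ≠ 0 := by
    exact_mod_cast (Fact.out : p.Prime).pos.ne'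
  have hg1 : 1 ≤ g := by
    rw [hg]
    refine Nat.one_le_iff_ne_zero.mpr (Nat.pos_iff_ne_zero.mp ?_)
    refine Int.gcd_pos_iff.mpr (Or.inr ?_)
    refine Int.natCast_ne_zero.mpr (Nat.pos_iff_ne_zero.mp ?_)
    refine Int.gcd_pos_iff.mpr (Or.inr ?_)
    refine Int.natCast_ne_zero.mpr (Nat.pos_iff_ne_zero.mp ?_)
    refine Int.gcd_pos_iff.mpr (Or.inr ?_)
    refine Int.natCast_ne_zero.mpr (Nat.pos_iff_ne_zero.mp ?_)
    exact Int.gcd_pos_iff.mpr (Or.inr hpZ)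
  have hgR : (1:ℝ) ≤ (g:ℝ) := by exact_mod_cast hg1
  by_cases h3 : (3 : ZMod p) = 0
  · -- p = 3, trivial bound
    have hp3 : p = 3 := by
      have hd : p ∣ 3 := (ZMod.natCast_eq_zero_iff 3 p).mp (by exact_mod_cast h3)
      exact (Nat.prime_dvd_prime_iff_eq Fact.out (by norm_num)).mp hd
    have hbound : ‖S‖ ≤ (p:ℝ) ^ 4 := by
      rw [hS]
      refine le_trans (norm_sum_le _ _) ?_
      have : ∀ x : Fin 4 → ZMod p,
          ‖(if x 0 ^ 3 + x 1 ^ 3 = a * (x 2 ^ 3 + x 3 ^ 3) then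
            Complex.exp (2 * Real.pi * Complex.I *
              ((∑ j, h j * ((x j).val : ℤ) : ℤ) : ℂ) / (p : ℂ))
          else 0)‖ ≤ 1 := by
        intro x
        split_ifs
        · rw [phase, psi_norm]
        · simp
      refine le_trans (Finset.sum_le_sum fun x _ => this x) ?_
      rw [Finset.sum_const, Finset.card_univ, nsmul_eq_mul, mul_one]
      have : Fintype.card (Fin 4 → ZMod p) = p ^ 4 := by
        rw [Fintype.card_fun, ZMod.card, Fintype.card_fin]
      rw [this]
      push_cast
      exact le_refl _
    have hp3R : (p:ℝ) = 3 := by rw [hp3]; norm_num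
    rw [hp3R] at hbound ⊢
    nlinarith [hgR]
  · -- main case
    have hcomp := completion (p := p) a h
    rw [← hS] at hcomp
    set c : Fin 4 → ZMod p := ![1, 1, -a, -a] with hc
    set hb : Fin 4 → ZMod p := fun j => ((h j : ℤ) : ZMod p) with hhb
    set P : ZMod p → ℂ := fun w => ∏ j : Fin 4, TT (c j * w) (hb j) with hP
    have hsplit : (p:ℝ) * ‖S‖ ≤ ‖P 0‖ + 324 * (p:ℝ) ^ 3 := by
      have e0 : (p:ℝ) * ‖S‖ = ‖(p:ℂ) * S‖ := by
        rw [norm_mul, Complex.norm_natCast]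
      rw [e0, hcomp]
      have e1 : ∑ w : ZMod p, P w = P 0 + ∑ w ∈ univ.erase (0: ZMod p), P w :=
        (Finset.add_sum_erase univ P (Finset.mem_univ 0)).symm
      calc ‖∑ w : ZMod p, P w‖ ≤ ‖P 0‖ + ‖∑ w ∈ univ.erase (0: ZMod p), P w‖ := by
            rw [e1]; exact norm_add_le _ _
        _ ≤ ‖P 0‖ + ∑ w ∈ univ.erase (0: ZMod p), ‖P w‖ := by
            have := norm_sum_le (univ.erase (0 : ZMod p)) P
            linarith
        _ ≤ ‖P 0‖ + 324 * (p:ℝ) ^ 3 := by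
            have := offzero_bound a ha h3 hb
            linarith
    by_cases hall : ∀ j, hb j = 0
    · -- all coefficients divisible by p : gcd = p
      have hP0 : P 0 = (p:ℂ) ^ 4 := by
        rw [hP]
        simp only
        have : ∀ j : Fin 4, TT (c j * 0) (hb j) = (p:ℂ) := by
          intro j
          rw [mul_zero, T_zero, if_pos (hall j)]
        rw [Finset.prod_congr rfl fun j _ => this j, Finset.prod_const, Finset.card_univ,
          Fintype.card_fin]
      have hnP0 : ‖P 0‖ = (p:ℝ) ^ 4 := by
        rw [hP0, norm_pow, Complex.norm_natCast]
      have hkey : (p:ℝ) * ‖S‖ ≤ (p:ℝ) ^ 4 + 324 * (p:ℝ) ^ 3 := by rw [← hnP0]; exact hsplit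
      have hSb : ‖S‖ ≤ 400 * (p:ℝ) ^ 3 := by
        have hpp : 2 * (p:ℝ) ^ 3 ≤ (p:ℝ) ^ 4 := by nlinarith [pow_pos hpPos 3]
        have h2 : (p:ℝ) ^ 4 + 324 * (p:ℝ) ^ 3 ≤ (p:ℝ) * (400 * (p:ℝ) ^ 3) := by
          nlinarith [pow_pos hpPos 3, hpp]
        exact le_of_mul_le_mul_left (hkey.trans h2) hpPos
      have hgp : (g:ℝ) = (p:ℝ) := by
        have hd : ∀ j, (p:ℤ) ∣ h j := by
          intro j
          exact (ZMod.intCast_zmod_eq_zero_iff_dvd (h j) p).mp (hall j)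
        have e3 : Int.gcd (h 3) (p:ℤ) = p := by
          rw [Int.gcd_eq_natAbs_right (hd 3), Int.natAbs_natCast]
        have e2 : Int.gcd (h 2) ((p:ℕ):ℤ) = p := by
          rw [Int.gcd_eq_natAbs_right (by exact_mod_cast hd 2), Int.natAbs_natCast]
        have e1 : Int.gcd (h 1) ((p:ℕ):ℤ) = p := by
          rw [Int.gcd_eq_natAbs_right (by exact_mod_cast hd 1), Int.natAbs_natCast]
        have e0 : Int.gcd (h 0) ((p:ℕ):ℤ) = p := by
          rw [Int.gcd_eq_natAbs_right (by exact_mod_cast hd 0), Int.natAbs_natCast]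
        have : g = p := by rw [hg, e3, e2, e1, e0]
        exact_mod_cast this
      rw [hgp]
      calc ‖S‖ ≤ 400 * (p:ℝ) ^ 3 := hSb
        _ = 400 * (p:ℝ) * (p:ℝ) ^ 2 := by ring
    · -- some coefficient nonzero mod p : the w = 0 term vanishes
      push_neg at hall
      obtain ⟨j0, hj0⟩ := hall
      have hP0 : P 0 = 0 := by
        rw [hP]
        refine Finset.prod_eq_zero (Finset.mem_univ j0) ?_
        rw [mul_zero, T_zero, if_neg hj0]
      have hkey : (p:ℝ) * ‖S‖ ≤ 324 * (p:ℝ) ^ 3 := by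
        have := hsplit
        rw [hP0, norm_zero] at this
        linarith
      have hSb : ‖S‖ ≤ 324 * (p:ℝ) ^ 2 := by
        have h2 : 324 * (p:ℝ) ^ 3 = (p:ℝ) * (324 * (p:ℝ) ^ 2) := by ring
        rw [h2] at hkey
        exact le_of_mul_le_mul_left hkey hpPos
      have : (324:ℝ) * (p:ℝ) ^ 2 ≤ 400 * (g:ℝ) * (p:ℝ) ^ 2 := by nlinarith [hgR]
      linarith
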